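/- Let n ≥ 1 and let A, B be convex bodies in ℝⁿ. Suppose that for every fractional linear map F that is admissible for A and B (i.e., A ∪ B is contained in the open half-space {x : ⟨x,c⟩ + d > 0} on which F is defined), the Lebesgue volume of F(A) is at most the Lebesgue volume of F(B). Then A ⊆ B. -/

import Mathlib

open MeasureTheory Pointwise

lemma auxDetLin {n : ℕ} (w ξ : EuclideanSpace ℝ (Fin n)) :
    LinearMap.det (LinearMap.id + (innerSL ℝ ξ).toLinearMap.smulRight w)
      = 1 + (inner ℝ ξ w : ℝ) := by
  classical
  set b := (EuclideanSpace.basisFun (Fin n) ℝ).toBasis with hb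
  rw [← LinearMap.det_toMatrix b]
  have hmat : LinearMap.toMatrix b b (LinearMap.id + (innerSL ℝ ξ).toLinearMap.smulRight w)
      = 1 + Matrix.replicateCol Unit w * Matrix.replicateRow Unit ξ := by
    ext i j
    rw [LinearMap.toMatrix_apply]
    simp [hb, Matrix.one_apply, Matrix.mul_apply, Matrix.replicateCol, Matrix.replicateRow,
      OrthonormalBasis.coe_toBasis, OrthonormalBasis.coe_toBasis_repr_apply,
      EuclideanSpace.basisFun_repr, EuclideanSpace.basisFun_apply,
      EuclideanSpace.single_apply, real_inner_comm ξ, mul_comm, EuclideanSpace.inner_single_right]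
  rw [hmat, Matrix.det_one_add_replicateCol_mul_replicateRow]
  simp [dotProduct, PiLp.inner_apply, RCLike.inner_apply, mul_comm]

lemma auxDetCLM {n : ℕ} (v x : EuclideanSpace ℝ (Fin n)) (a : ℝ) :
    ContinuousLinearMap.det
      (a • (ContinuousLinearMap.id ℝ (EuclideanSpace ℝ (Fin n))
        + (a • innerSL ℝ v).smulRight x))
      = a ^ n * (1 + a * (inner ℝ v x : ℝ)) := by
  have h1 : (↑(a • (ContinuousLinearMap.id ℝ (EuclideanSpace ℝ (Fin n))
        + (a • innerSL ℝ v).smulRight x)) : EuclideanSpace ℝ (Fin n) →ₗ[ℝ] EuclideanSpace ℝ (Fin n))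
      = a • (LinearMap.id + (innerSL ℝ (a • v)).toLinearMap.smulRight x) := by
    ext y
    simp [real_inner_smul_left, smul_smul, mul_comm]
  show LinearMap.det _ = _
  rw [h1, LinearMap.det_smul, auxDetLin, finrank_euclideanSpace_fin, real_inner_smul_left]

lemma auxDeriv {n : ℕ} (v : EuclideanSpace ℝ (Fin n)) (d : ℝ) (x : EuclideanSpace ℝ (Fin n))
    (hx : d - (inner ℝ v x : ℝ) ≠ 0) :
    HasFDerivAt (fun y : EuclideanSpace ℝ (Fin n) => (d - (inner ℝ v y : ℝ))⁻¹ • y)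
      ((d - (inner ℝ v x : ℝ))⁻¹ • (ContinuousLinearMap.id ℝ (EuclideanSpace ℝ (Fin n))
        + ((d - (inner ℝ v x : ℝ))⁻¹ • innerSL ℝ v).smulRight x)) x := by
  have h0 : HasFDerivAt (fun y : EuclideanSpace ℝ (Fin n) => d - (inner ℝ v y : ℝ))
      (-(innerSL ℝ v)) x := by
    have h := (hasFDerivAt_const d x).sub ((innerSL ℝ v).hasFDerivAt (x := x))
    rw [zero_sub] at h
    exact h
  have h1 := (hasDerivAt_inv hx).comp_hasFDerivAt x h0
  have h2 := h1.smul (hasFDerivAt_id x)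
  refine h2.congr_fderiv ?_
  refine ContinuousLinearMap.ext fun y => ?_
  simp only [ContinuousLinearMap.smul_apply, ContinuousLinearMap.add_apply,
    ContinuousLinearMap.coe_id', id_eq, ContinuousLinearMap.smulRight_apply,
    ContinuousLinearMap.coe_smul', Pi.smul_apply, innerSL_apply_apply,
    ContinuousLinearMap.neg_apply, smul_eq_mul, Function.comp_apply]
  match_scalars <;> field_simp <;> ring

set_option maxHeartbeats 1000000 in
theorem subset_of_volume_projective_positions_le (n : ℕ) (hn : 1 ≤ n)
    (A B : Set (EuclideanSpace ℝ (Fin n)))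
    (hA₁ : IsCompact A) (hA₂ : Convex ℝ A) (hA₃ : (interior A).Nonempty)
    (hB₁ : IsCompact B) (hB₂ : Convex ℝ B) (hB₃ : (interior B).Nonempty)
    (h : ∀ (M : EuclideanSpace ℝ (Fin n) →ₗ[ℝ] EuclideanSpace ℝ (Fin n))
        (b c : EuclideanSpace ℝ (Fin n)) (d : ℝ),
        Function.Bijective (fun p : EuclideanSpace ℝ (Fin n) × ℝ =>
          (M p.1 + p.2 • b, (inner ℝ p.1 c : ℝ) + p.2 * d)) →
        (∀ x ∈ A ∪ B, 0 < (inner ℝ x c : ℝ) + d) →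
        volume ((fun x => ((inner ℝ x c : ℝ) + d)⁻¹ • (M x + b)) '' A) ≤
          volume ((fun x => ((inner ℝ x c : ℝ) + d)⁻¹ • (M x + b)) '' B)) :
    A ⊆ B := by
  intro a haA
  by_contra haB
  -- separating functional
  obtain ⟨g, s, hgB, hga⟩ := geometric_hahn_banach_closed_point hB₂ hB₁.isClosed haB
  set v : EuclideanSpace ℝ (Fin n) := (InnerProductSpace.toDual ℝ _).symm g with hvdef
  have hgv : ∀ x, g x = (inner ℝ v x : ℝ) := fun x => (InnerProductSpace.toDual_symm_apply).symm
  obtain ⟨p₀, hp₀⟩ := hB₃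
  have hv0 : v ≠ 0 := by
    intro h0
    have h1 := hgB p₀ (interior_subset hp₀)
    rw [hgv, h0, inner_zero_left] at h1
    rw [hgv, h0, inner_zero_left] at hga
    linarith
  have hvn : 0 < ‖v‖ := norm_pos_iff.2 hv0
  -- maximum of ⟨v,·⟩ over A
  have hcont : Continuous fun x : EuclideanSpace ℝ (Fin n) => (inner ℝ v x : ℝ) :=
    continuous_const.inner continuous_id
  obtain ⟨a₀, ha₀A, hmax⟩ := hA₁.exists_isMaxOn ⟨a, haA⟩ hcont.continuousOn
  set m : ℝ := inner ℝ v a₀ with hmdef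
  have hmA : ∀ x ∈ A, (inner ℝ v x : ℝ) ≤ m := fun x hx => hmax hx
  have hBs : ∀ x ∈ B, (inner ℝ v x : ℝ) < s := by
    intro x hx; rw [← hgv]; exact hgB x hx
  have hsm : s < m := by
    have h1 := hga; rw [hgv] at h1
    exact lt_of_lt_of_le h1 (hmA a haA)
  have hms : 0 < m - s := by linarith
  -- interior ball
  obtain ⟨p, hp⟩ := hA₃
  obtain ⟨ε, hε, hball⟩ := Metric.isOpen_iff.1 isOpen_interior p hp
  set r : ℝ := ε / 2 with hrdef
  have hr : 0 < r := by positivity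
  have hballA : Metric.ball p r ⊆ A := by
    refine fun y hy => interior_subset (hball ?_)
    exact Metric.ball_subset_ball (by linarith) hy
  have hpA : p ∈ A := interior_subset hp
  -- constants
  set W : ℝ := (m - inner ℝ v p) + r * ‖v‖ with hWdef
  have hW : 0 < W := by
    have := hmA p hpA
    have h2 : 0 < r * ‖v‖ := mul_pos hr hvn
    rw [hWdef]; linarith
  have hKfin : volume B ≠ ⊤ := hB₁.measure_lt_top.ne
  set K : ℝ := (volume B).toReal with hKdef
  have hK0 : 0 ≤ K := ENNReal.toReal_nonneg
  set c₁ : ℝ := (volume (Metric.ball (0 : EuclideanSpace ℝ (Fin n)) 1)).toReal with hc₁def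
  have hc₁ : 0 < c₁ :=
    ENNReal.toReal_pos (Metric.measure_ball_pos _ _ one_pos).ne' measure_ball_lt_top.ne
  set CR : ℝ := ((m - s)⁻¹) ^ (n + 1) * K with hCRdef
  have hCR : 0 ≤ CR := by positivity
  set CL : ℝ := (2⁻¹ : ℝ) ^ (n + 1) * ((r / W) ^ n * c₁) with hCLdef
  have hCL : 0 < CL := by positivity
  set dcap : ℝ := if m < 0 then -m else 1 with hdcapdef
  have hdcap : 0 < dcap := by
    rw [hdcapdef]; split_ifs with hm
    · linarith
    · norm_num
  have hCLCR : 0 < CL / (CR + 1) := div_pos hCL (by linarith)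
  set δ : ℝ := min (min W (CL / (CR + 1))) dcap / 2 with hδdef
  have hmin : 0 < min (min W (CL / (CR + 1))) dcap := lt_min (lt_min hW hCLCR) hdcap
  have hδ : 0 < δ := by rw [hδdef]; exact half_pos hmin
  have hhalf : δ < min (min W (CL / (CR + 1))) dcap := by
    rw [hδdef]; exact half_lt_self hmin
  have hδW : δ < W := hhalf.trans_le ((min_le_left _ _).trans (min_le_left _ _))
  have hδC : δ < CL / (CR + 1) := hhalf.trans_le ((min_le_left _ _).trans (min_le_right _ _))
  have hδd : δ < dcap := hhalf.trans_le (min_le_right _ _)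
  set dd : ℝ := m + δ with hdddef
  have hdd : dd ≠ 0 := by
    rcases lt_or_ge m 0 with hm | hm
    · have : dcap = -m := by rw [hdcapdef, if_pos hm]
      rw [this] at hδd
      have : dd < 0 := by rw [hdddef]; linarith
      exact this.ne
    · have : 0 < dd := by rw [hdddef]; linarith
      exact this.ne'
  have habs : 0 < |dd| := abs_pos.2 hdd
  have hmds : 0 < m + δ - s := by linarith
  -- the fractional linear map
  set ℓ : EuclideanSpace ℝ (Fin n) → ℝ := fun y => dd - inner ℝ v y with hℓdef
  have hℓA : ∀ x ∈ A, δ ≤ ℓ x := by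
    intro x hx
    have := hmA x hx
    simp only [hℓdef, hdddef]; linarith
  have hℓB : ∀ x ∈ B, m + δ - s ≤ ℓ x := by
    intro x hx
    have := hBs x hx
    simp only [hℓdef, hdddef]; linarith
  have hposA : ∀ x ∈ A, 0 < ℓ x := fun x hx => lt_of_lt_of_le hδ (hℓA x hx)
  have hposB : ∀ x ∈ B, 0 < ℓ x := fun x hx => lt_of_lt_of_le hmds (hℓB x hx)
  set f : EuclideanSpace ℝ (Fin n) → EuclideanSpace ℝ (Fin n) :=
    fun y => (ℓ y)⁻¹ • y with hfdef
  set f' : EuclideanSpace ℝ (Fin n) → (EuclideanSpace ℝ (Fin n) →L[ℝ] EuclideanSpace ℝ (Fin n)) :=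
    fun x => (ℓ x)⁻¹ • (ContinuousLinearMap.id ℝ (EuclideanSpace ℝ (Fin n))
      + ((ℓ x)⁻¹ • innerSL ℝ v).smulRight x) with hf'def
  have hder : ∀ x : EuclideanSpace ℝ (Fin n), ℓ x ≠ 0 → HasFDerivAt f (f' x) x := by
    intro x hx
    simp only [hfdef, hf'def, hℓdef] at *
    exact auxDeriv v dd x hx
  have hdet : ∀ x : EuclideanSpace ℝ (Fin n), 0 < ℓ x →
      |(f' x).det| = ((ℓ x)⁻¹) ^ (n + 1) * |dd| := by
    intro x hx
    have hx0 : ℓ x ≠ 0 := hx.ne'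
    have hdet0 : (f' x).det = ((ℓ x)⁻¹) ^ (n + 1) * dd := by
      simp only [hf'def]
      rw [auxDetCLM v x ((ℓ x)⁻¹)]
      have h1 : 1 + (ℓ x)⁻¹ * (inner ℝ v x : ℝ) = (ℓ x)⁻¹ * dd := by
        have h2 : ℓ x + (inner ℝ v x : ℝ) = dd := by simp only [hℓdef]; ring
        rw [← h2, mul_add, inv_mul_cancel₀ hx0]
      rw [h1, pow_succ]; ring
    rw [hdet0, abs_mul, abs_pow, abs_of_pos (inv_pos.2 hx)]
  -- injectivity on the positive half-space
  have hinjU : Set.InjOn f {y : EuclideanSpace ℝ (Fin n) | 0 < ℓ y} := by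
    intro x hx y hy hxy
    have hx0 : ℓ x ≠ 0 := (Set.mem_setOf_eq ▸ hx).ne'
    have hy0 : ℓ y ≠ 0 := (Set.mem_setOf_eq ▸ hy).ne'
    have hzx : x = ℓ x • f x := by
      simp only [hfdef]; rw [smul_smul, mul_inv_cancel₀ hx0, one_smul]
    have hzy : y = ℓ y • f x := by
      rw [hxy] at hzx ⊢
      simp only [hfdef]; rw [smul_smul, mul_inv_cancel₀ hy0, one_smul]
    have e1 : ℓ x * (1 + (inner ℝ v (f x) : ℝ)) = dd := by
      have h2 : ℓ x = dd - inner ℝ v (ℓ x • f x) := by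
        conv_lhs => rw [hℓdef]
        rw [← hzx]
      rw [real_inner_smul_right] at h2
      ring_nf at h2 ⊢
      linarith
    have e2 : ℓ y * (1 + (inner ℝ v (f x) : ℝ)) = dd := by
      have h2 : ℓ y = dd - inner ℝ v (ℓ y • f x) := by
        conv_lhs => rw [hℓdef]
        rw [← hzy]
      rw [real_inner_smul_right] at h2
      ring_nf at h2 ⊢
      linarith
    have hzne : (1 : ℝ) + (inner ℝ v (f x) : ℝ) ≠ 0 := by
      intro h0
      rw [h0, mul_zero] at e1
      exact hdd e1.symm
    have hℓeq : ℓ x = ℓ y := mul_right_cancel₀ hzne (e1.trans e2.symm)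
    rw [hzx, hzy, hℓeq]
  -- apply the hypothesis
  have hbij : Function.Bijective (fun p : EuclideanSpace ℝ (Fin n) × ℝ =>
      ((LinearMap.id : EuclideanSpace ℝ (Fin n) →ₗ[ℝ] EuclideanSpace ℝ (Fin n)) p.1
        + p.2 • (0 : EuclideanSpace ℝ (Fin n)), (inner ℝ p.1 (-v) : ℝ) + p.2 * dd)) := by
    rw [Function.bijective_iff_has_inverse]
    refine ⟨fun q => (q.1, (q.2 + (inner ℝ q.1 v : ℝ)) / dd), fun p => ?_, fun q => ?_⟩
    · obtain ⟨p1, p2⟩ := p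
      simp only [LinearMap.id_coe, id_eq, smul_zero, add_zero, inner_neg_right]
      refine Prod.ext rfl ?_
      show (-(inner ℝ p1 v : ℝ) + p2 * dd + inner ℝ p1 v) / dd = p2
      field_simp
      ring
    · obtain ⟨q1, q2⟩ := q
      simp only [LinearMap.id_coe, id_eq, smul_zero, add_zero, inner_neg_right]
      refine Prod.ext rfl ?_
      show -(inner ℝ q1 v : ℝ) + (q2 + inner ℝ q1 v) / dd * dd = q2
      field_simp
      ring
  have hadm : ∀ x ∈ A ∪ B, 0 < (inner ℝ x (-v) : ℝ) + dd := by
    intro x hx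
    have hx' : (inner ℝ x (-v) : ℝ) + dd = ℓ x := by
      simp only [hℓdef, inner_neg_right]
      rw [real_inner_comm x v]; ring
    rw [hx']
    rcases hx with hx | hx
    · exact hposA x hx
    · exact hposB x hx
  have key := h LinearMap.id 0 (-v) dd hbij hadm
  have hfun : ∀ x : EuclideanSpace ℝ (Fin n),
      ((inner ℝ x (-v) : ℝ) + dd)⁻¹ •
        ((LinearMap.id : EuclideanSpace ℝ (Fin n) →ₗ[ℝ] EuclideanSpace ℝ (Fin n)) x
          + (0 : EuclideanSpace ℝ (Fin n))) = f x := by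
    intro x
    simp only [LinearMap.id_coe, id_eq, add_zero, inner_neg_right, hfdef, hℓdef]
    congr 2
    rw [real_inner_comm x v]; ring
  rw [Set.image_congr' hfun, Set.image_congr' hfun] at key
  -- the small ball S near the maximizer
  set lam : ℝ := δ / W with hlamdef
  have hlam0 : 0 < lam := div_pos hδ hW
  have hlam1 : lam ≤ 1 := by
    rw [hlamdef, div_le_one hW]; linarith
  have hlW : lam * W = δ := div_mul_cancel₀ δ hW.ne'
  set q : EuclideanSpace ℝ (Fin n) := a₀ + lam • (p - a₀) with hqdef
  set S : Set (EuclideanSpace ℝ (Fin n)) := Metric.ball q (lam * r) with hSdef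
  have hlr : 0 < lam * r := mul_pos hlam0 hr
  have hSA : S ⊆ A := by
    intro y hy
    rw [hSdef, Metric.mem_ball, dist_eq_norm] at hy
    set w : EuclideanSpace ℝ (Fin n) := y - q with hwdef
    set x : EuclideanSpace ℝ (Fin n) := p + lam⁻¹ • w with hxdef
    have hxball : x ∈ Metric.ball p r := by
      rw [Metric.mem_ball, dist_eq_norm]
      have : x - p = lam⁻¹ • w := by rw [hxdef]; abel
      rw [this, norm_smul, Real.norm_eq_abs, abs_of_pos (inv_pos.2 hlam0)]
      calc lam⁻¹ * ‖w‖ < lam⁻¹ * (lam * r) :=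
            mul_lt_mul_of_pos_left hy (inv_pos.2 hlam0)
        _ = r := by field_simp
    have hxA : x ∈ A := hballA hxball
    have hrep : y = (1 - lam) • a₀ + lam • x := by
      have hli : lam • (lam⁻¹ • w) = w := smul_inv_smul₀ hlam0.ne' w
      rw [hxdef, smul_add, hli]
      have hyw : y = q + w := by rw [hwdef]; abel
      rw [hyw, hqdef]
      module
    rw [hrep]
    exact hA₂ ha₀A hxA (by linarith) hlam0.le (by ring)
  have hSφ : ∀ y ∈ S, m - δ ≤ (inner ℝ v y : ℝ) := by
    intro y hy
    rw [hSdef, Metric.mem_ball, dist_eq_norm] at hy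
    have hq : (inner ℝ v q : ℝ) = m + lam * ((inner ℝ v p : ℝ) - m) := by
      rw [hqdef]
      rw [inner_add_right, real_inner_smul_right, inner_sub_right, hmdef]
    have hwle : ‖y - q‖ ≤ lam * r := hy.le
    have hiw : -(‖v‖ * (lam * r)) ≤ (inner ℝ v (y - q) : ℝ) := by
      have h1 : |(inner ℝ v (y - q) : ℝ)| ≤ ‖v‖ * ‖y - q‖ := abs_real_inner_le_norm v (y - q)
      have h2 : ‖v‖ * ‖y - q‖ ≤ ‖v‖ * (lam * r) :=
        mul_le_mul_of_nonneg_left hwle (norm_nonneg v)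
      have h3 := (abs_le.1 h1).1
      linarith
    have hyy : (inner ℝ v y : ℝ) = inner ℝ v q + inner ℝ v (y - q) := by
      rw [← inner_add_right]; congr 1; abel
    have hexp : lam * ((m - inner ℝ v p) + r * ‖v‖) = δ := by
      rw [← hWdef]; exact hlW
    rw [hyy, hq]
    nlinarith [hiw, hexp]
  have hℓS : ∀ y ∈ S, ℓ y ≤ 2 * δ := by
    intro y hy
    have := hSφ y hy
    simp only [hℓdef, hdddef]; linarith
  -- change of variables: upper bound for B
  have hfB : ∀ x ∈ B, HasFDerivWithinAt f (f' x) B x :=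
    fun x hx => (hder x (hposB x hx).ne').hasFDerivWithinAt
  have hinjB : Set.InjOn f B := hinjU.mono fun x hx => hposB x hx
  have upper : volume (f '' B)
      ≤ ENNReal.ofReal (((m + δ - s)⁻¹) ^ (n + 1) * |dd|) * volume B := by
    rw [← lintegral_abs_det_fderiv_eq_addHaar_image volume hB₁.measurableSet hfB hinjB]
    calc ∫⁻ x in B, ENNReal.ofReal |(f' x).det| ∂volume
        ≤ ∫⁻ _x in B, ENNReal.ofReal (((m + δ - s)⁻¹) ^ (n + 1) * |dd|) ∂volume := by
          refine lintegral_mono_ae ((ae_restrict_iff' hB₁.measurableSet).2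
            (Filter.Eventually.of_forall fun x hx => ?_))
          rw [hdet x (hposB x hx)]
          refine ENNReal.ofReal_le_ofReal ?_
          have h1 : (ℓ x)⁻¹ ≤ (m + δ - s)⁻¹ := inv_anti₀ hmds (hℓB x hx)
          have h2 : (0:ℝ) ≤ (ℓ x)⁻¹ := (inv_pos.2 (hposB x hx)).le
          exact mul_le_mul_of_nonneg_right (pow_le_pow_left₀ h2 h1 _) (abs_nonneg dd)
      _ = ENNReal.ofReal (((m + δ - s)⁻¹) ^ (n + 1) * |dd|) * volume B :=
          setLIntegral_const B _
  -- change of variables: lower bound on S ⊆ A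
  have hfS : ∀ x ∈ S, HasFDerivWithinAt f (f' x) S x :=
    fun x hx => (hder x (hposA x (hSA hx)).ne').hasFDerivWithinAt
  have hinjS : Set.InjOn f S := hinjU.mono fun x hx => hposA x (hSA hx)
  have lower : ENNReal.ofReal (((2 * δ)⁻¹) ^ (n + 1) * |dd|) * volume S
      ≤ volume (f '' S) := by
    rw [← lintegral_abs_det_fderiv_eq_addHaar_image volume measurableSet_ball hfS hinjS,
      ← setLIntegral_const S (ENNReal.ofReal (((2 * δ)⁻¹) ^ (n + 1) * |dd|))]
    refine lintegral_mono_ae ((ae_restrict_iff' measurableSet_ball).2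
      (Filter.Eventually.of_forall fun x hx => ?_))
    rw [hdet x (hposA x (hSA hx))]
    refine ENNReal.ofReal_le_ofReal ?_
    have h1 : (2 * δ)⁻¹ ≤ (ℓ x)⁻¹ := inv_anti₀ (hposA x (hSA hx)) (hℓS x hx)
    have h2 : (0:ℝ) ≤ (2 * δ)⁻¹ := by positivity
    exact mul_le_mul_of_nonneg_right (pow_le_pow_left₀ h2 h1 _) (abs_nonneg dd)
  have hvolS : volume S
      = ENNReal.ofReal ((lam * r) ^ n) * volume (Metric.ball (0 : EuclideanSpace ℝ (Fin n)) 1) := by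
    rw [hSdef, Measure.addHaar_ball_of_pos volume q hlr, finrank_euclideanSpace_fin]
  -- combine
  have main : ENNReal.ofReal (((2 * δ)⁻¹) ^ (n + 1) * |dd|)
        * (ENNReal.ofReal ((lam * r) ^ n)
          * volume (Metric.ball (0 : EuclideanSpace ℝ (Fin n)) 1))
      ≤ ENNReal.ofReal (((m + δ - s)⁻¹) ^ (n + 1) * |dd|) * volume B := by
    rw [← hvolS]
    exact le_trans lower (le_trans (measure_mono (Set.image_mono hSA))
      (le_trans key upper))
  have hne : ENNReal.ofReal (((m + δ - s)⁻¹) ^ (n + 1) * |dd|) * volume B ≠ ⊤ :=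
    ENNReal.mul_ne_top ENNReal.ofReal_ne_top hKfin
  have htr := ENNReal.toReal_mono hne main
  have hA1 : (0:ℝ) ≤ ((2 * δ)⁻¹) ^ (n + 1) * |dd| := by positivity
  have hA2 : (0:ℝ) ≤ (lam * r) ^ n := by positivity
  have hA3 : (0:ℝ) ≤ ((m + δ - s)⁻¹) ^ (n + 1) * |dd| := by positivity
  rw [ENNReal.toReal_mul, ENNReal.toReal_mul, ENNReal.toReal_mul,
    ENNReal.toReal_ofReal hA1, ENNReal.toReal_ofReal hA2, ENNReal.toReal_ofReal hA3,
    ← hc₁def, ← hKdef] at htr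
  -- final real arithmetic
  have epow : (δ⁻¹) ^ n * δ ^ n = 1 := by
    rw [← mul_pow, inv_mul_cancel₀ hδ.ne', one_pow]
  have e1 : ((2 * δ)⁻¹) ^ (n + 1) * ((lam * r) ^ n * c₁) = δ⁻¹ * CL := by
    have hlr2 : lam * r = δ * (r / W) := by rw [hlamdef]; ring
    rw [hlr2, mul_inv, mul_pow, mul_pow]
    calc (2⁻¹:ℝ) ^ (n + 1) * (δ⁻¹) ^ (n + 1) * (δ ^ n * (r / W) ^ n * c₁)
        = ((δ⁻¹) ^ n * δ ^ n) * (δ⁻¹ * ((2⁻¹:ℝ) ^ (n + 1) * ((r / W) ^ n * c₁))) := by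
          rw [pow_succ]; ring
      _ = δ⁻¹ * CL := by rw [epow, one_mul, hCLdef]
  have hreal' : δ⁻¹ * CL ≤ ((m + δ - s)⁻¹) ^ (n + 1) * K := by
    have h2 := htr
    rw [show ((2 * δ)⁻¹) ^ (n + 1) * |dd| * ((lam * r) ^ n * c₁)
        = |dd| * (((2 * δ)⁻¹) ^ (n + 1) * ((lam * r) ^ n * c₁)) from by ring,
      show ((m + δ - s)⁻¹) ^ (n + 1) * |dd| * K
        = |dd| * (((m + δ - s)⁻¹) ^ (n + 1) * K) from by ring] at h2
    have h3 := le_of_mul_le_mul_left h2 habs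
    rwa [e1] at h3
  have h2 : ((m + δ - s)⁻¹) ^ (n + 1) * K ≤ CR := by
    have hinv : (m + δ - s)⁻¹ ≤ (m - s)⁻¹ := inv_anti₀ hms (by linarith)
    rw [hCRdef]
    exact mul_le_mul_of_nonneg_right (pow_le_pow_left₀ (by positivity) hinv _) hK0
  have h3 : CR + 1 < δ⁻¹ * CL := by
    have h4 : δ * (CR + 1) < CL := (lt_div_iff₀ (by linarith)).1 hδC
    have h5 := mul_lt_mul_of_pos_left h4 (inv_pos.2 hδ)
    rwa [← mul_assoc, inv_mul_cancel₀ hδ.ne', one_mul] at h5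
  linarith
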